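/- Let G be a finite simple graph and G' the result of a transposition replacing edges {u,v}, {x,y} (with deg(u) = deg(x)) by {u,y}, {x,v}. Then G and G' have the same joint degree matrix: for all a, b, the number of edges whose endpoint degrees are {a,b} is the same in G and G'. -/
import Mathlib

open Finset SimpleGraph

/-- The graph obtained from `G` by replacing the edges `{u,v}` and `{x,y}`
with the edges `{u,y}` and `{x,v}`. -/
def transposed {V : Type*} (G : SimpleGraph V) (u v x y : V) : SimpleGraph V :=
  SimpleGraph.fromEdgeSet ((G.edgeSet \ {s(u, v), s(x, y)}) ∪ {s(u, y), s(x, v)})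

set_option maxHeartbeats 1000000 in
theorem transposition_preserves_jdm
    {V : Type*} [Fintype V] [DecidableEq V] (G : SimpleGraph V) [DecidableRel G.Adj]
    (u v x y : V)
    (huv : G.Adj u v) (hxy : G.Adj x y)
    (hux : u ≠ x) (huy : u ≠ y) (hvx : v ≠ x) (hvy : v ≠ y)
    (hdeg : G.degree u = G.degree x)
    (hnuy : ¬ G.Adj u y) (hnxv : ¬ G.Adj x v) :
    ∀ a b : ℕ,
      {e ∈ (transposed G u v x y).edgeSet |
          Sym2.map (fun w => ((transposed G u v x y).neighborSet w).ncard) e = s(a, b)}.ncard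
        = (G.edgeFinset.filter (fun e =>
            Sym2.map (fun w => G.degree w) e = s(a, b))).card := by
  intro a b
  have huv' := G.ne_of_adj huv
  have hxy' := G.ne_of_adj hxy
  -- neighbor sets of the transposed graph
  have hNu : (transposed G u v x y).neighborSet u = insert y (G.neighborSet u \ {v}) := by
    ext z
    simp only [transposed, mem_neighborSet, fromEdgeSet_adj, Set.mem_union, Set.mem_diff,
      Set.mem_insert_iff, Set.mem_singleton_iff, Sym2.eq_iff, SimpleGraph.mem_edgeSet]
    constructor
    · rintro ⟨h | h, hne⟩ <;> [skip; rcases h with h | h] <;> tauto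
    · rintro (rfl | ⟨hz, hzv⟩)
      · have : u ≠ z := huy
        tauto
      · have h1 : u ≠ z := G.ne_of_adj hz
        refine ⟨Or.inl ⟨hz, ?_⟩, h1⟩
        push_neg
        constructor <;> tauto
  have hNv : (transposed G u v x y).neighborSet v = insert x (G.neighborSet v \ {u}) := by
    ext z
    simp only [transposed, mem_neighborSet, fromEdgeSet_adj, Set.mem_union, Set.mem_diff,
      Set.mem_insert_iff, Set.mem_singleton_iff, Sym2.eq_iff, SimpleGraph.mem_edgeSet]
    have hvu : G.Adj v u := huv.symm
    constructor
    · rintro ⟨h | h, hne⟩ <;> [skip; rcases h with h | h] <;> tauto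
    · rintro (rfl | ⟨hz, hzu⟩)
      · have h1 : v ≠ z := fun h => hvx h
        tauto
      · have h1 : v ≠ z := G.ne_of_adj hz
        refine ⟨Or.inl ⟨hz, ?_⟩, h1⟩
        push_neg
        constructor <;> tauto
  have hNx : (transposed G u v x y).neighborSet x = insert v (G.neighborSet x \ {y}) := by
    ext z
    simp only [transposed, mem_neighborSet, fromEdgeSet_adj, Set.mem_union, Set.mem_diff,
      Set.mem_insert_iff, Set.mem_singleton_iff, Sym2.eq_iff, SimpleGraph.mem_edgeSet]
    have hxu : x ≠ u := hux.symm
    constructor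
    · rintro ⟨h | h, hne⟩ <;> [skip; rcases h with h | h] <;> tauto
    · rintro (rfl | ⟨hz, hzy⟩)
      · have h1 : x ≠ z := fun h => hvx h.symm
        tauto
      · have h1 : x ≠ z := G.ne_of_adj hz
        refine ⟨Or.inl ⟨hz, ?_⟩, h1⟩
        push_neg
        constructor <;> tauto
  have hNy : (transposed G u v x y).neighborSet y = insert u (G.neighborSet y \ {x}) := by
    ext z
    simp only [transposed, mem_neighborSet, fromEdgeSet_adj, Set.mem_union, Set.mem_diff,
      Set.mem_insert_iff, Set.mem_singleton_iff, Sym2.eq_iff, SimpleGraph.mem_edgeSet]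
    have hyx : G.Adj y x := hxy.symm
    have hyu : y ≠ u := huy.symm
    have hyv : y ≠ v := hvy.symm
    constructor
    · rintro ⟨h | h, hne⟩ <;> [skip; rcases h with h | h] <;> tauto
    · rintro (rfl | ⟨hz, hzx⟩)
      · tauto
      · have h1 : y ≠ z := G.ne_of_adj hz
        refine ⟨Or.inl ⟨hz, ?_⟩, h1⟩
        push_neg
        constructor <;> tauto
  have hNo : ∀ w, w ≠ u → w ≠ v → w ≠ x → w ≠ y →
      (transposed G u v x y).neighborSet w = G.neighborSet w := by
    intro w h1 h2 h3 h4
    ext z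
    simp only [transposed, mem_neighborSet, fromEdgeSet_adj, Set.mem_union, Set.mem_diff,
      Set.mem_insert_iff, Set.mem_singleton_iff, Sym2.eq_iff, SimpleGraph.mem_edgeSet]
    constructor
    · rintro ⟨h | h, hne⟩ <;> [skip; rcases h with h | h] <;> tauto
    · intro hz
      have h5 : w ≠ z := G.ne_of_adj hz
      refine ⟨Or.inl ⟨hz, ?_⟩, h5⟩
      push_neg
      constructor <;> tauto
  have ncardN : ∀ w, (G.neighborSet w).ncard = G.degree w := by
    intro w
    rw [← Nat.card_coe_set_eq, Nat.card_eq_fintype_card, ← Set.toFinset_card]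
    rfl
  have step : ∀ (w p q : V), G.Adj w p → ¬ G.Adj w q →
      (insert q (G.neighborSet w \ {p})).ncard = G.degree w := by
    intro w p q hp hq
    have hqm : q ∉ G.neighborSet w \ {p} := fun h => hq h.1
    rw [Set.ncard_insert_of_notMem hqm (Set.toFinite _),
      Set.ncard_diff_singleton_add_one (show p ∈ G.neighborSet w from hp) (Set.toFinite _),
      ncardN]
  have key : ∀ w, ((transposed G u v x y).neighborSet w).ncard = G.degree w := by
    intro w
    by_cases h1 : w = u
    · subst h1; rw [hNu]; exact step _ _ _ huv hnuy
    by_cases h2 : w = v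
    · subst h2; rw [hNv]; exact step _ _ _ huv.symm (fun h => hnxv h.symm)
    by_cases h3 : w = x
    · subst h3; rw [hNx]; exact step _ _ _ hxy hnxv
    by_cases h4 : w = y
    · subst h4; rw [hNy]; exact step _ _ _ hxy.symm (fun h => hnuy h.symm)
    · rw [hNo w h1 h2 h3 h4, ncardN]
  have hfun : (fun w => ((transposed G u v x y).neighborSet w).ncard)
      = fun w => G.degree w := funext key
  rw [hfun]
  set P : Sym2 V → Prop := fun e => Sym2.map (fun w => G.degree w) e = s(a, b) with hP
  have hPdec : DecidablePred P := fun e => by rw [hP]; infer_instance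
  -- the edge set as a finset
  set Efin : Finset (Sym2 V) :=
    (G.edgeFinset \ {s(u, v), s(x, y)}) ∪ {s(u, y), s(x, v)} with hEfin
  have hE : (transposed G u v x y).edgeSet = ↑Efin := by
    rw [transposed, edgeSet_fromEdgeSet, hEfin]
    ext e
    simp only [Set.mem_diff, Set.mem_union, Set.mem_insert_iff, Set.mem_singleton_iff,
      Set.mem_setOf_eq, Finset.coe_union, Finset.coe_sdiff, Finset.coe_insert,
      Finset.coe_singleton, Finset.mem_coe, Finset.mem_union, Finset.mem_sdiff,
      Finset.mem_insert, Finset.mem_singleton, mem_edgeFinset, SimpleGraph.mem_edgeSet]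
    constructor
    · rintro ⟨h, -⟩; exact h
    · rintro (⟨h, hne⟩ | h)
      · exact ⟨Or.inl ⟨h, hne⟩, G.not_isDiag_of_mem_edgeSet h⟩
      · refine ⟨Or.inr h, ?_⟩
        rcases h with rfl | rfl <;> simp [huy, hvx.symm]
  have lhs_eq : {e ∈ (transposed G u v x y).edgeSet | P e} = ↑(Efin.filter P) := by
    rw [hE, Finset.coe_filter]
    ext e
    simp
  rw [lhs_eq, Set.ncard_coe_finset]
  -- now pure finset counting
  have he1 : s(u, v) ∈ G.edgeFinset := by simpa [mem_edgeFinset] using huv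
  have he2 : s(x, y) ∈ G.edgeFinset := by simpa [mem_edgeFinset] using hxy
  have he3 : s(u, y) ∉ G.edgeFinset := by simpa [mem_edgeFinset] using hnuy
  have he4 : s(x, v) ∉ G.edgeFinset := by simpa [mem_edgeFinset] using hnxv
  have hne12 : s(u, v) ≠ s(x, y) := by simp [Sym2.eq_iff]; tauto
  have hne34 : s(u, y) ≠ s(x, v) := by simp [Sym2.eq_iff]; tauto
  set F := G.edgeFinset.filter P with hF
  have hfil : Efin.filter P = (F \ {s(u, v), s(x, y)}) ∪ ({s(u, y), s(x, v)} : Finset _).filter P := by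
    rw [hEfin, hF]
    ext e
    simp only [Finset.mem_filter, Finset.mem_union, Finset.mem_sdiff, Finset.mem_insert,
      Finset.mem_singleton]
    tauto
  have hdisj : Disjoint (F \ {s(u, v), s(x, y)}) (({s(u, y), s(x, v)} : Finset _).filter P) := by
    rw [Finset.disjoint_left]
    intro e he he'
    have h1 : e ∈ G.edgeFinset := (Finset.mem_filter.mp (Finset.mem_sdiff.mp he).1).1
    have h2 := (Finset.mem_filter.mp he').1
    simp only [Finset.mem_insert, Finset.mem_singleton] at h2
    rcases h2 with rfl | rfl <;> [exact he3 h1; exact he4 h1]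
  have hinter : F ∩ ({s(u, v), s(x, y)} : Finset _) = ({s(u, v), s(x, y)} : Finset _).filter P := by
    rw [hF]
    ext e
    simp only [Finset.mem_inter, Finset.mem_filter, Finset.mem_insert, Finset.mem_singleton]
    constructor
    · tauto
    · rintro ⟨(rfl | rfl), hp⟩ <;> tauto
  have hsplit : (F \ ({s(u, v), s(x, y)} : Finset _)).card
      + (F ∩ ({s(u, v), s(x, y)} : Finset _)).card = F.card :=
    Finset.card_sdiff_add_card_inter F _
  have hPmap : ∀ c d : V, P s(c, d) ↔ s(G.degree c, G.degree d) = s(a, b) := by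
    intro c d; rw [hP]; simp
  have h14 : P s(u, v) ↔ P s(x, v) := by rw [hPmap, hPmap, hdeg]
  have h23 : P s(x, y) ↔ P s(u, y) := by rw [hPmap, hPmap, hdeg]
  have hcards : (({s(u, y), s(x, v)} : Finset _).filter P).card
      = (({s(u, v), s(x, y)} : Finset _).filter P).card := by
    have h14' := h14.symm
    have h23' := h23.symm
    simp only [Finset.filter_insert, Finset.filter_singleton]
    by_cases h1 : P s(u, v) <;> by_cases h2 : P s(x, y)
    · rw [if_pos (h23.mp h2), if_pos (h14.mp h1), if_pos h1, if_pos h2,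
        Finset.card_pair hne34, Finset.card_pair hne12]
    · rw [if_neg (fun h => h2 (h23'.mp h)), if_pos (h14.mp h1), if_pos h1, if_neg h2]
      simp
    · rw [if_pos (h23.mp h2), if_neg (fun h => h1 (h14'.mp h)), if_neg h1, if_pos h2]
      simp
    · rw [if_neg (fun h => h2 (h23'.mp h)), if_neg (fun h => h1 (h14'.mp h)), if_neg h1,
        if_neg h2]
  have main : (Efin.filter P).card = F.card := by
    rw [hfil, Finset.card_union_of_disjoint hdisj, hcards, ← hinter]
    omega
  rw [main, hF]
  congr!
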